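/- (Ky Fan's maximum principle.) For every X ∈ Sⁿ and every 1 ≤ k ≤ n, λ₁(X) + λ₂(X) + … + λ_k(X) = sup{ tr(A Aᵀ X) : A is a real n×k matrix with Aᵀ A = I_k }, and the supremum is attained by some A with Aᵀ A = I_k. -/

import Mathlib

open Matrix

/-- `lam` is the nonincreasing list of eigenvalues (with multiplicity) of the real
symmetric matrix `X`: `lam` is nonincreasing and `X` is orthogonally similar to
`diag lam`. -/
def IsSortedEigs (n : ℕ) (X : Matrix (Fin n) (Fin n) ℝ) (lam : Fin n → ℝ) : Prop :=
  Antitone lam ∧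
    ∃ U : Matrix (Fin n) (Fin n) ℝ, Uᵀ * U = 1 ∧ X = U * Matrix.diagonal lam * Uᵀ

lemma kyfan_card_filter (n k : ℕ) (hkn : k ≤ n) :
    (Finset.univ.filter (fun i : Fin n => (i : ℕ) < k)).card = k := by
  rw [Finset.card_filter, Fin.sum_univ_eq_sum_range (fun m => if m < k then (1:ℕ) else 0),
    ← Finset.card_filter]
  have : Finset.filter (fun x => x < k) (Finset.range n) = Finset.range k := by
    ext x; simp; omega
  rw [this, Finset.card_range]

lemma kyfan_weight_sum_le (n k : ℕ) (hk1 : 1 ≤ k) (hkn : k ≤ n) (lam d : Fin n → ℝ)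
    (hmono : Antitone lam) (hd0 : ∀ i, 0 ≤ d i) (hd1 : ∀ i, d i ≤ 1)
    (hsum : ∑ i, d i = k) :
    ∑ i, lam i * d i ≤ ∑ i ∈ Finset.univ.filter (fun i : Fin n => (i : ℕ) < k), lam i := by
  set S := Finset.univ.filter (fun i : Fin n => (i : ℕ) < k) with hS
  have ht : k - 1 < n := by omega
  set t : Fin n := ⟨k - 1, ht⟩ with htdef
  have hcard : (S.card : ℝ) = k := by rw [hS, kyfan_card_filter n k hkn]
  have hsplit : ∑ i ∈ S, d i + ∑ i ∈ Sᶜ, d i = k := by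
    rw [Finset.sum_add_sum_compl]; exact hsum
  have e1 : ∑ i ∈ S, (1 - d i) = ∑ i ∈ Sᶜ, d i := by
    rw [Finset.sum_sub_distrib, Finset.sum_const, nsmul_eq_mul, mul_one]
    linarith
  have h1 : ∀ i ∈ S, lam i * d i + lam t * (1 - d i) ≤ lam i := by
    intro i hi
    have hik : (i : ℕ) < k := by simpa [hS] using hi
    have hle : lam t ≤ lam i := hmono (by rw [Fin.le_def]; simp [htdef]; omega)
    nlinarith [hd1 i, hd0 i]
  have h2 : ∀ i ∈ Sᶜ, lam i * d i ≤ lam t * d i := by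
    intro i hi
    have hik : ¬ (i : ℕ) < k := by simpa [hS] using hi
    have hle : lam i ≤ lam t := hmono (by rw [Fin.le_def]; simp [htdef]; omega)
    nlinarith [hd0 i]
  calc ∑ i, lam i * d i = ∑ i ∈ S, lam i * d i + ∑ i ∈ Sᶜ, lam i * d i :=
        (Finset.sum_add_sum_compl S _).symm
    _ ≤ ∑ i ∈ S, lam i * d i + ∑ i ∈ Sᶜ, lam t * d i :=
        add_le_add_right (Finset.sum_le_sum h2) _
    _ = ∑ i ∈ S, lam i * d i + lam t * ∑ i ∈ S, (1 - d i) := by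
        rw [e1, Finset.mul_sum]
    _ = ∑ i ∈ S, (lam i * d i + lam t * (1 - d i)) := by
        rw [Finset.mul_sum, Finset.sum_add_distrib]
    _ ≤ ∑ i ∈ S, lam i := Finset.sum_le_sum h1

theorem ky_fan_maximum_principle (n k : ℕ) (hk1 : 1 ≤ k) (hkn : k ≤ n)
    (X : Matrix (Fin n) (Fin n) ℝ) (hX : Xᵀ = X)
    (lam : Fin n → ℝ) (hlam : IsSortedEigs n X lam) :
    IsGreatest {x : ℝ | ∃ A : Matrix (Fin n) (Fin k) ℝ, Aᵀ * A = 1 ∧ x = (A * Aᵀ * X).trace}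
      (∑ i ∈ Finset.univ.filter (fun i : Fin n => (i : ℕ) < k), lam i) := by
  obtain ⟨hmono, U, hU, hXU⟩ := hlam
  have hU2 : U * Uᵀ = 1 := mul_eq_one_comm.mp hU
  -- key trace formula
  have key : ∀ A : Matrix (Fin n) (Fin k) ℝ,
      (A * Aᵀ * X).trace = ∑ i, lam i * ((Uᵀ * A * (Uᵀ * A)ᵀ) i i) := by
    intro A
    have h1 : (A * Aᵀ * X).trace = (Matrix.diagonal lam * (Uᵀ * A * (Uᵀ * A)ᵀ)).trace := by
      rw [hXU]
      rw [show A * Aᵀ * (U * Matrix.diagonal lam * Uᵀ)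
          = (A * (Aᵀ * (U * Matrix.diagonal lam))) * Uᵀ by
        simp only [Matrix.mul_assoc]]
      rw [Matrix.trace_mul_comm]
      rw [show Uᵀ * (A * (Aᵀ * (U * Matrix.diagonal lam)))
          = (Uᵀ * A * (Uᵀ * A)ᵀ) * Matrix.diagonal lam by
        simp only [Matrix.transpose_mul, Matrix.transpose_transpose, Matrix.mul_assoc]]
      rw [Matrix.trace_mul_comm]
    rw [h1]
    simp [Matrix.trace, Matrix.diag, Matrix.diagonal_mul]
  constructor
  · -- membership
    set E : Matrix (Fin n) (Fin k) ℝ :=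
      Matrix.of fun i j => if i = Fin.castLE hkn j then (1:ℝ) else 0 with hEdef
    have hEE : Eᵀ * E = 1 := by
      ext a b
      simp [hEdef, Matrix.mul_apply, Matrix.one_apply, ite_and, Fin.castLE_inj, eq_comm]
    have hUE : Uᵀ * (U * E) = E := by rw [← Matrix.mul_assoc, hU, Matrix.one_mul]
    have hEET : ∀ i : Fin n, (E * Eᵀ) i i = if (i : ℕ) < k then 1 else 0 := by
      intro i
      rw [Matrix.mul_apply]
      have hterm : ∀ a : Fin k, E i a * Eᵀ a i = if i = Fin.castLE hkn a then (1:ℝ) else 0 := by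
        intro a
        rw [Matrix.transpose_apply]
        simp only [hEdef, Matrix.of_apply]
        split <;> simp
      simp only [hterm]
      by_cases hik : (i : ℕ) < k
      · rw [if_pos hik, Finset.sum_eq_single_of_mem ⟨(i : ℕ), hik⟩ (Finset.mem_univ _)]
        · rw [if_pos (show i = Fin.castLE hkn ⟨(i : ℕ), hik⟩ from Fin.ext rfl)]
        · intro b _ hb
          rw [if_neg]
          intro hc
          exact hb (Fin.ext (congrArg Fin.val hc).symm)
      · rw [if_neg hik, Finset.sum_eq_zero]
        intro b _
        rw [if_neg]
        intro hc
        exact hik (by rw [hc]; exact b.isLt)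
    refine ⟨U * E, ?_, ?_⟩
    · rw [Matrix.transpose_mul]
      calc Eᵀ * Uᵀ * (U * E) = Eᵀ * (Uᵀ * U) * E := by simp only [Matrix.mul_assoc]
        _ = 1 := by rw [hU, Matrix.mul_one, hEE]
    · rw [key (U * E), hUE]
      simp only [hEET, mul_ite, mul_one, mul_zero]
      rw [← Finset.sum_filter]
  · rintro x ⟨A, hA, rfl⟩
    set B := Uᵀ * A with hBdef
    have hBB : Bᵀ * B = 1 := by
      rw [hBdef, Matrix.transpose_mul, Matrix.transpose_transpose]
      calc Aᵀ * U * (Uᵀ * A) = Aᵀ * (U * Uᵀ) * A := by simp only [Matrix.mul_assoc]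
        _ = 1 := by rw [hU2, Matrix.mul_one, hA]
    set P := B * Bᵀ with hPdef
    have hPsym : Pᵀ = P := by rw [hPdef, Matrix.transpose_mul, Matrix.transpose_transpose]
    have hPP : P * P = P := by
      rw [hPdef]
      calc B * Bᵀ * (B * Bᵀ) = B * (Bᵀ * B) * Bᵀ := by simp only [Matrix.mul_assoc]
        _ = B * Bᵀ := by rw [hBB, Matrix.mul_one]
    have hd0 : ∀ i, 0 ≤ P i i := by
      intro i
      rw [hPdef, Matrix.mul_apply]
      apply Finset.sum_nonneg
      intro a _
      rw [Matrix.transpose_apply]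
      exact mul_self_nonneg _
    have hd1 : ∀ i, P i i ≤ 1 := by
      intro i
      have h := congrFun (congrFun hPP i) i
      rw [Matrix.mul_apply] at h
      have hsq : ∀ j, P i j * P j i = (P i j)^2 := by
        intro j
        have hji : P i j = P j i := congrFun (congrFun hPsym j) i
        rw [← hji]; ring
      have hge : P i i * P i i ≤ P i i := by
        calc P i i * P i i ≤ ∑ j, P i j * P j i := by
              refine Finset.single_le_sum (f := fun j => P i j * P j i) ?_ (Finset.mem_univ i)
              intro j _
              show 0 ≤ P i j * P j i
              rw [hsq j]
              exact sq_nonneg _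
          _ = P i i := h
      nlinarith [hd0 i]
    have hsum : ∑ i, P i i = k := by
      have : ∑ i, P i i = P.trace := rfl
      rw [this, hPdef, Matrix.trace_mul_comm, hBB, Matrix.trace_one]
      simp
    rw [key A]
    exact kyfan_weight_sum_le n k hk1 hkn lam (fun i => P i i) hmono hd0 hd1 hsum
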